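/- The matrices u = [[1,2],[0,1]] and v = [[1,0],[2,1]] generate a free subgroup of SL₂(ℤ) of rank 2. -/

import Mathlib

open Matrix Pointwise

/-- Nonzero integer vectors in the plane. -/
def V2 : Type := {p : Fin 2 → ℤ // p ≠ 0}

noncomputable instance : MulAction (Matrix.SpecialLinearGroup (Fin 2) ℤ) V2 where
  smul g p := ⟨(g : Matrix (Fin 2) (Fin 2) ℤ).mulVec p.1, by
    intro h
    apply p.2
    have : ((g⁻¹ : Matrix.SpecialLinearGroup (Fin 2) ℤ) : Matrix (Fin 2) (Fin 2) ℤ).mulVec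
        (((g : Matrix.SpecialLinearGroup (Fin 2) ℤ) : Matrix (Fin 2) (Fin 2) ℤ).mulVec p.1) = p.1 := by
      rw [Matrix.mulVec_mulVec, ← Matrix.SpecialLinearGroup.coe_mul, inv_mul_cancel,
        Matrix.SpecialLinearGroup.coe_one, Matrix.one_mulVec]
    rw [h, Matrix.mulVec_zero] at this
    exact this.symm⟩
  one_smul p := Subtype.ext (by
    show ((1 : Matrix.SpecialLinearGroup (Fin 2) ℤ) : Matrix (Fin 2) (Fin 2) ℤ).mulVec p.1 = p.1
    rw [Matrix.SpecialLinearGroup.coe_one, Matrix.one_mulVec])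
  mul_smul g h p := Subtype.ext (by
    show (((g * h : Matrix.SpecialLinearGroup (Fin 2) ℤ)) : Matrix (Fin 2) (Fin 2) ℤ).mulVec p.1 = _
    rw [Matrix.SpecialLinearGroup.coe_mul, ← Matrix.mulVec_mulVec]
    rfl)

lemma V2.smul_coe (g : Matrix.SpecialLinearGroup (Fin 2) ℤ) (p : V2) :
    (g • p).1 = (g : Matrix (Fin 2) (Fin 2) ℤ).mulVec p.1 := rfl

lemma V2.smul_coords (g : Matrix.SpecialLinearGroup (Fin 2) ℤ) (p : V2) (a b c d : ℤ)
    (hg : (g : Matrix (Fin 2) (Fin 2) ℤ) = !![a, b; c, d]) :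
    (g • p).1 0 = a * p.1 0 + b * p.1 1 ∧ (g • p).1 1 = c * p.1 0 + d * p.1 1 := by
  constructor <;>
  · rw [V2.smul_coe, hg]
    simp [Matrix.mulVec, dotProduct, Fin.sum_univ_two]

lemma V2.ne (p : V2) : p.1 0 ≠ 0 ∨ p.1 1 ≠ 0 := by
  by_contra h
  push_neg at h
  exact p.2 (funext fun i => by fin_cases i <;> simp [h.1, h.2])

namespace SanovAux

def X0 : Set V2 := {p | p.1 1 ^ 2 ≤ p.1 0 * p.1 1}
def X1 : Set V2 := {p | p.1 0 ^ 2 ≤ p.1 0 * p.1 1 ∧ p.1 0 * p.1 1 < p.1 1 ^ 2}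
def Y0 : Set V2 := {p | p.1 0 * p.1 1 < -(p.1 1 ^ 2)}
def Y1 : Set V2 := {p | -(p.1 1 ^ 2) ≤ p.1 0 * p.1 1 ∧ p.1 0 * p.1 1 < 0}

lemma dX0X1 : Disjoint X0 X1 := by
  rw [Set.disjoint_left]
  rintro p h1 h2
  simp only [X0, X1, Set.mem_setOf_eq] at h1 h2
  linarith [h2.2]

lemma dY0Y1 : Disjoint Y0 Y1 := by
  rw [Set.disjoint_left]
  rintro p h1 h2
  simp only [Y0, Y1, Set.mem_setOf_eq] at h1 h2
  linarith [h2.1]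

lemma dX0Y0 : Disjoint X0 Y0 := by
  rw [Set.disjoint_left]
  rintro p h1 h2
  simp only [X0, Y0, Set.mem_setOf_eq] at h1 h2
  nlinarith [sq_nonneg (p.1 1)]

lemma dX0Y1 : Disjoint X0 Y1 := by
  rw [Set.disjoint_left]
  rintro p h1 h2
  simp only [X0, Y1, Set.mem_setOf_eq] at h1 h2
  nlinarith [sq_nonneg (p.1 1), h2.2]

lemma dX1Y0 : Disjoint X1 Y0 := by
  rw [Set.disjoint_left]
  rintro p h1 h2
  simp only [X1, Y0, Set.mem_setOf_eq] at h1 h2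
  nlinarith [sq_nonneg (p.1 0), sq_nonneg (p.1 1), h1.1]

lemma dX1Y1 : Disjoint X1 Y1 := by
  rw [Set.disjoint_left]
  rintro p h1 h2
  simp only [X1, Y1, Set.mem_setOf_eq] at h1 h2
  nlinarith [sq_nonneg (p.1 0), h1.1, h2.2]

lemma hUX (u : Matrix.SpecialLinearGroup (Fin 2) ℤ)
    (hu : (u : Matrix (Fin 2) (Fin 2) ℤ) = !![1, 2; 0, 1]) : u • Y0ᶜ ⊆ X0 := by
  intro q hq
  rw [Set.mem_smul_set] at hq
  obtain ⟨p, hp, rfl⟩ := hq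
  simp only [Y0, Set.mem_compl_iff, Set.mem_setOf_eq, not_lt] at hp
  obtain ⟨h0, h1⟩ := V2.smul_coords u p 1 2 0 1 hu
  simp only [X0, Set.mem_setOf_eq, h0, h1]
  nlinarith [hp]

lemma hUY (u : Matrix.SpecialLinearGroup (Fin 2) ℤ)
    (hu : (u : Matrix (Fin 2) (Fin 2) ℤ) = !![1, 2; 0, 1]) : u⁻¹ • X0ᶜ ⊆ Y0 := by
  have huinv : ((u⁻¹ : Matrix.SpecialLinearGroup (Fin 2) ℤ) : Matrix (Fin 2) (Fin 2) ℤ)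
      = !![1, -2; 0, 1] := by
    rw [Matrix.SpecialLinearGroup.coe_inv, hu, Matrix.adjugate_fin_two]
    norm_num
  intro q hq
  rw [Set.mem_smul_set] at hq
  obtain ⟨p, hp, rfl⟩ := hq
  simp only [X0, Set.mem_compl_iff, Set.mem_setOf_eq, not_le] at hp
  obtain ⟨h0, h1⟩ := V2.smul_coords u⁻¹ p 1 (-2) 0 1 huinv
  simp only [Y0, Set.mem_setOf_eq, h0, h1]
  nlinarith [hp]

lemma hVX (v : Matrix.SpecialLinearGroup (Fin 2) ℤ)
    (hv : (v : Matrix (Fin 2) (Fin 2) ℤ) = !![1, 0; 2, 1]) : v • Y1ᶜ ⊆ X1 := by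
  intro q hq
  rw [Set.mem_smul_set] at hq
  obtain ⟨p, hp, rfl⟩ := hq
  simp only [Y1, Set.mem_compl_iff, Set.mem_setOf_eq, not_and, not_lt] at hp
  obtain ⟨h0, h1⟩ := V2.smul_coords v p 1 0 2 1 hv
  simp only [X1, Set.mem_setOf_eq, h0, h1]
  set x := p.1 0
  set y := p.1 1
  rcases lt_or_ge (x * y) (-(y ^ 2)) with h | h
  · constructor
    · nlinarith [mul_pos (by nlinarith : (0:ℤ) < -(x*y)) (by nlinarith : (0:ℤ) < -(x*y + y^2)),
        sq_nonneg y]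
    · nlinarith [mul_pos (by nlinarith : (0:ℤ) < -(x*y)) (by nlinarith : (0:ℤ) < -(x*y + y^2)),
        sq_nonneg y, sq_nonneg (x+y), sq_nonneg (x-y)]
  · have hxy : 0 ≤ x * y := hp h
    constructor
    · nlinarith [sq_nonneg x]
    · rcases eq_or_ne x 0 with hx | hx
      · have hy : y ≠ 0 := (V2.ne p).resolve_left (by simpa [x] using hx)
        have : 0 < y ^ 2 := by positivity
        nlinarith
      · have : 0 < x ^ 2 := by positivity
        nlinarith

lemma hVY (v : Matrix.SpecialLinearGroup (Fin 2) ℤ)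
    (hv : (v : Matrix (Fin 2) (Fin 2) ℤ) = !![1, 0; 2, 1]) : v⁻¹ • X1ᶜ ⊆ Y1 := by
  have hvinv : ((v⁻¹ : Matrix.SpecialLinearGroup (Fin 2) ℤ) : Matrix (Fin 2) (Fin 2) ℤ)
      = !![1, 0; -2, 1] := by
    rw [Matrix.SpecialLinearGroup.coe_inv, hv, Matrix.adjugate_fin_two]
    norm_num
  intro q hq
  rw [Set.mem_smul_set] at hq
  obtain ⟨p, hp, rfl⟩ := hq
  simp only [X1, Set.mem_compl_iff, Set.mem_setOf_eq, not_and, not_lt] at hp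
  obtain ⟨h0, h1⟩ := V2.smul_coords v⁻¹ p 1 0 (-2) 1 hvinv
  simp only [Y1, Set.mem_setOf_eq, h0, h1]
  set x := p.1 0
  set y := p.1 1
  rcases lt_or_ge (x * y) (x ^ 2) with h | h
  · constructor
    · rcases le_or_gt (x * y) 0 with h0' | h0'
      · nlinarith [sq_nonneg x, sq_nonneg y]
      · nlinarith [mul_pos h0' (by nlinarith : (0:ℤ) < x^2 - x*y), sq_nonneg (x-y), sq_nonneg y]
    · nlinarith [sq_nonneg x]
  · have hyy : y ^ 2 ≤ x * y := hp h
    have hx : x ≠ 0 := by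
      rcases V2.ne p with h' | h'
      · exact h'
      · intro h0'
        apply h'
        rw [h0'] at hyy
        nlinarith [sq_nonneg y, hyy]
    have hx2 : 0 < x ^ 2 := by positivity
    constructor
    · nlinarith [sq_nonneg (x - y), sq_nonneg y]
    · nlinarith [sq_nonneg (x - y), sq_nonneg y]

end SanovAux

open SanovAux in
/-- `u = [[1,2],[0,1]]` and `v = [[1,0],[2,1]]` generate a free subgroup of
`SL₂(ℤ)` of rank 2: the induced homomorphism from the free group on two
generators is injective. -/
theorem u_v_generate_free_group
    (u v : Matrix.SpecialLinearGroup (Fin 2) ℤ)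
    (hu : (u : Matrix (Fin 2) (Fin 2) ℤ) = !![1, 2; 0, 1])
    (hv : (v : Matrix (Fin 2) (Fin 2) ℤ) = !![1, 0; 2, 1]) :
    Function.Injective
      ⇑(FreeGroup.lift (![u, v] : Fin 2 → Matrix.SpecialLinearGroup (Fin 2) ℤ)) := by
  apply FreeGroup.injective_lift_of_ping_pong _ ![X0, X1] ![Y0, Y1]
  · intro i
    fin_cases i
    · exact ⟨⟨![1, 0], by intro h; simpa using congrFun h 0⟩, by
        show ((![1, 0] : Fin 2 → ℤ) 1) ^ 2 ≤ (![1, 0] : Fin 2 → ℤ) 0 * (![1, 0] : Fin 2 → ℤ) 1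
        simp [X0]⟩
    · exact ⟨⟨![0, 1], by intro h; simpa using congrFun h 1⟩, by
        show ((![0, 1] : Fin 2 → ℤ) 0) ^ 2 ≤ (![0, 1] : Fin 2 → ℤ) 0 * (![0, 1] : Fin 2 → ℤ) 1 ∧
          (![0, 1] : Fin 2 → ℤ) 0 * (![0, 1] : Fin 2 → ℤ) 1 < ((![0, 1] : Fin 2 → ℤ) 1) ^ 2
        simp [X1]⟩
  · intro i j hij
    fin_cases i <;> fin_cases j <;>
      first
        | exact absurd rfl hij
        | exact dX0X1
        | exact dX0X1.symm
  · intro i j hij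
    fin_cases i <;> fin_cases j <;>
      first
        | exact absurd rfl hij
        | exact dY0Y1
        | exact dY0Y1.symm
  · intro i j
    fin_cases i <;> fin_cases j <;>
      first
        | exact dX0Y0
        | exact dX0Y1
        | exact dX1Y0
        | exact dX1Y1
  · intro i
    fin_cases i
    · exact hUX u hu
    · exact hVX v hv
  · intro i
    fin_cases i
    · exact hUY u hu
    · exact hVY v hv
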